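/- arXiv:1710.08496 — 4 statements merged into one kernel-verified Lean document; each statement's English description precedes it below -/
import Mathlib

section
/- Let A be a real symmetric positive definite d×d matrix with condition number κ = ‖A‖/λ_min(A), let c > 0, and let Ĥ be a real symmetric positive semidefinite d×d matrix with ‖Ĥ − A‖ ≤ c‖A‖. Set H = Ĥ + c‖A‖·I. Then H is positive definite (hence invertible) and (1 − 2cκ/(1 + 2cκ))·A⁻¹ ⪯ H⁻¹ ⪯ A⁻¹ in the Loewner order. -/
open Matrix

/-- Spectral norm (largest singular value) of a real matrix. -/
noncomputable def specNorm {m n : ℕ} (A : Matrix (Fin m) (Fin n) ℝ) : ℝ :=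
  ‖(LinearMap.toContinuousLinearMap (Matrix.toEuclideanLin A))‖

lemma dot_bound {d : ℕ} (M : Matrix (Fin d) (Fin d) ℝ) (x : Fin d → ℝ) :
    |x ⬝ᵥ (M *ᵥ x)| ≤ specNorm M * (x ⬝ᵥ x) := by
  set L := LinearMap.toContinuousLinearMap (Matrix.toEuclideanLin M) with hL
  set v : EuclideanSpace ℝ (Fin d) := (WithLp.equiv 2 (Fin d → ℝ)).symm x with hv
  have h1 : x ⬝ᵥ (M *ᵥ x) = inner ℝ v (L v) := by
    simp [hL, hv, PiLp.inner_apply, dotProduct, RCLike.inner_apply,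
      Matrix.toEuclideanLin_apply, LinearMap.coe_toContinuousLinearMap', mul_comm]
  have h2 : x ⬝ᵥ x = ‖v‖ ^ 2 := by
    rw [EuclideanSpace.norm_eq, Real.sq_sqrt (Finset.sum_nonneg fun i _ => sq_nonneg _)]
    simp [hv, dotProduct, Real.norm_eq_abs, sq_abs, sq]
  have h3 : |inner ℝ v (L v)| ≤ ‖v‖ * ‖L v‖ := abs_real_inner_le_norm v (L v)
  have h4 : ‖L v‖ ≤ ‖L‖ * ‖v‖ := L.le_opNorm v
  have h5 : (0:ℝ) ≤ ‖v‖ := norm_nonneg v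
  rw [h1, h2, specNorm, ← hL]
  nlinarith

lemma psd_of_norm_le {d : ℕ} {M : Matrix (Fin d) (Fin d) ℝ} (hM : M.IsHermitian)
    {r : ℝ} (h : specNorm M ≤ r) :
    (r • (1 : Matrix (Fin d) (Fin d) ℝ) - M).PosSemidef ∧
    (M + r • (1 : Matrix (Fin d) (Fin d) ℝ)).PosSemidef := by
  have h1 : (r • (1 : Matrix (Fin d) (Fin d) ℝ)).IsHermitian := by
    show _ᴴ = _
    rw [Matrix.conjTranspose_smul, Matrix.conjTranspose_one]
    simp
  have key : ∀ x : Fin d → ℝ, |x ⬝ᵥ (M *ᵥ x)| ≤ r * (x ⬝ᵥ x) := by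
    intro x
    refine (dot_bound M x).trans (mul_le_mul_of_nonneg_right h ?_)
    exact Finset.sum_nonneg fun i _ => mul_self_nonneg _
  constructor
  · refine PosSemidef.of_dotProduct_mulVec_nonneg (h1.sub hM) fun x => ?_
    have := key x
    have habs := abs_le.mp this
    simp only [star_trivial, sub_mulVec, smul_mulVec, one_mulVec,
      dotProduct_sub, dotProduct_smul, smul_eq_mul]
    linarith [habs.2]
  · refine PosSemidef.of_dotProduct_mulVec_nonneg (hM.add h1) fun x => ?_
    have habs := abs_le.mp (key x)
    simp only [star_trivial, add_mulVec, smul_mulVec, one_mulVec,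
      dotProduct_add, dotProduct_smul, smul_eq_mul]
    linarith [habs.1]

lemma psd_conj {d : ℕ} {X B : Matrix (Fin d) (Fin d) ℝ} (hX : X.PosSemidef)
    (hB : B.IsHermitian) : (B * X * B).PosSemidef := by
  have := hX.mul_mul_conjTranspose_same B
  rwa [hB.eq] at this

lemma posdef_conj {d : ℕ} {X B : Matrix (Fin d) (Fin d) ℝ} (hX : X.PosDef)
    (hB : B.IsHermitian) (hBu : IsUnit B.det) : (B * X * B).PosDef := by
  refine PosDef.of_dotProduct_mulVec_pos (psd_conj hX.posSemidef hB).1 fun x hx => ?_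
  have hinj : Function.Injective (B.mulVec) :=
    Matrix.mulVec_injective_iff_isUnit.mpr (Matrix.isUnit_iff_isUnit_det B |>.mpr hBu)
  have hBx : B *ᵥ x ≠ 0 := fun h => hx (hinj (by simpa using h))
  have := hX.dotProduct_mulVec_pos hBx
  simp only [star_trivial] at this ⊢
  calc 0 < (B *ᵥ x) ⬝ᵥ (X *ᵥ (B *ᵥ x)) := this
    _ = x ⬝ᵥ ((B * X * B) *ᵥ x) := by
        rw [← mulVec_mulVec, ← mulVec_mulVec, Matrix.dotProduct_mulVec x B,
          ← Matrix.mulVec_transpose]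
        congr 1
        have hBt : Bᵀ = B := by simpa using hB.eq
        rw [hBt]

lemma psd_smul {d : ℕ} {X : Matrix (Fin d) (Fin d) ℝ} (hX : X.PosSemidef)
    {r : ℝ} (hr : 0 ≤ r) : (r • X).PosSemidef := by
  have hh : (r • X).IsHermitian := by
    show _ᴴ = _
    rw [Matrix.conjTranspose_smul, hX.1.eq]
    simp
  refine PosSemidef.of_dotProduct_mulVec_nonneg hh fun x => ?_
  simp only [star_trivial, smul_mulVec, dotProduct_smul, smul_eq_mul]
  exact mul_nonneg hr (hX.dotProduct_mulVec_nonneg x)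

lemma posdef_smul {d : ℕ} {X : Matrix (Fin d) (Fin d) ℝ} (hX : X.PosDef)
    {r : ℝ} (hr : 0 < r) : (r • X).PosDef := by
  have hh : (r • X).IsHermitian := by
    show _ᴴ = _
    rw [Matrix.conjTranspose_smul, hX.1.eq]
    simp
  refine PosDef.of_dotProduct_mulVec_pos hh fun x hx => ?_
  simp only [star_trivial, smul_mulVec, dotProduct_smul, smul_eq_mul]
  exact mul_pos hr (hX.dotProduct_mulVec_pos hx)

open scoped MatrixOrder in
/-- The positive-definite square root, with invertibility facts. -/
lemma sqrt_facts {d : ℕ} {N : Matrix (Fin d) (Fin d) ℝ} (hN : N.PosDef) :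
    ∃ T : Matrix (Fin d) (Fin d) ℝ, T.IsHermitian ∧ IsUnit T.det ∧ T * T = N := by
  refine ⟨CFC.sqrt N, (CFC.sqrt_nonneg N).posSemidef.1, ?_, CFC.sqrt_mul_sqrt_self N hN.posSemidef.nonneg⟩
  have h : (CFC.sqrt N).det * (CFC.sqrt N).det = N.det := by
    rw [← det_mul, CFC.sqrt_mul_sqrt_self N hN.posSemidef.nonneg]
  have : N.det ≠ 0 := hN.det_pos.ne'
  refine isUnit_iff_ne_zero.mpr fun h0 => this ?_
  rw [← h, h0, mul_zero]

lemma inv_one_sub {d : ℕ} {N : Matrix (Fin d) (Fin d) ℝ} (hN : N.PosDef)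
    (h : ((1 : Matrix (Fin d) (Fin d) ℝ) - N).PosSemidef) :
    (N⁻¹ - (1 : Matrix (Fin d) (Fin d) ℝ)).PosSemidef := by
  obtain ⟨T, hTh, hTu, hTT⟩ := sqrt_facts hN
  have hTdet : T.det ≠ 0 := hTu.ne_zero
  have hTinvh : (T⁻¹).IsHermitian := hTh.inv
  have key : N⁻¹ - 1 = T⁻¹ * (1 - N) * T⁻¹ := by
    rw [mul_sub, sub_mul, mul_one, ← hTT, Matrix.mul_inv_rev]
    rw [show T⁻¹ * (T * T) * T⁻¹ = (T⁻¹ * T) * (T * T⁻¹) by simp only [mul_assoc]]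
    rw [Matrix.nonsing_inv_mul T hTu, Matrix.mul_nonsing_inv T hTu, mul_one]
  rw [key]
  exact psd_conj h hTinvh

lemma inv_anti {d : ℕ} {A B : Matrix (Fin d) (Fin d) ℝ} (hA : A.PosDef) (hB : B.PosDef)
    (h : (B - A).PosSemidef) : (A⁻¹ - B⁻¹).PosSemidef := by
  obtain ⟨S, hSh, hSu, hSS⟩ := sqrt_facts hB
  have hSdet : S.det ≠ 0 := hSu.ne_zero
  have hSinvh : (S⁻¹).IsHermitian := hSh.inv
  have hSinvu : IsUnit (S⁻¹).det := S.isUnit_nonsing_inv_det hSu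
  set M := S⁻¹ * A * S⁻¹ with hM
  have hMpd : M.PosDef := posdef_conj hA hSinvh hSinvu
  have hSBS : S⁻¹ * B * S⁻¹ = 1 := by
    rw [← hSS, show S⁻¹ * (S * S) * S⁻¹ = (S⁻¹ * S) * (S * S⁻¹) by simp only [mul_assoc],
      Matrix.nonsing_inv_mul S hSu, Matrix.mul_nonsing_inv S hSu, mul_one]
  have h1M : ((1 : Matrix (Fin d) (Fin d) ℝ) - M).PosSemidef := by
    have := psd_conj h hSinvh
    rw [mul_sub, sub_mul, hSBS] at this
    rwa [← hM] at this
  have h2 := inv_one_sub hMpd h1M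
  have hMinv : M⁻¹ = S * A⁻¹ * S := by
    rw [hM, Matrix.mul_inv_rev, Matrix.mul_inv_rev,
      Matrix.nonsing_inv_nonsing_inv S hSu, mul_assoc]
  have key : A⁻¹ - B⁻¹ = S⁻¹ * (M⁻¹ - 1) * S⁻¹ := by
    rw [mul_sub, sub_mul, mul_one, hMinv]
    have e1 : S⁻¹ * (S * A⁻¹ * S) * S⁻¹ = (S⁻¹ * S) * (A⁻¹ * (S * S⁻¹)) := by
      simp only [mul_assoc]
    rw [e1, Matrix.nonsing_inv_mul S hSu, Matrix.mul_nonsing_inv S hSu, one_mul, mul_one]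
    congr 1
    rw [← hSS, Matrix.mul_inv_rev]
  rw [key]
  exact psd_conj h2 hSinvh

lemma lam_min_psd {d : ℕ} [NeZero d] {A : Matrix (Fin d) (Fin d) ℝ} (hA : A.PosDef) :
    (A - (⨅ i, hA.isHermitian.eigenvalues i) • (1 : Matrix (Fin d) (Fin d) ℝ)).PosSemidef := by
  set μ := ⨅ i, hA.isHermitian.eigenvalues i with hμ
  have hle : ∀ i, μ ≤ hA.isHermitian.eigenvalues i := fun i =>
    ciInf_le (Finite.bddBelow_range _) i
  set U : Matrix (Fin d) (Fin d) ℝ :=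
    (hA.isHermitian.eigenvectorUnitary : Matrix (Fin d) (Fin d) ℝ) with hU
  have hUU : U * star U = 1 :=
    Matrix.mem_unitaryGroup_iff.mp hA.isHermitian.eigenvectorUnitary.2
  have hspec : A = U * diagonal (hA.isHermitian.eigenvalues) * star U := by
    have := hA.isHermitian.spectral_theorem
    rwa [RCLike.ofReal_real_eq_id, Function.id_comp] at this
  have key : A - μ • (1 : Matrix (Fin d) (Fin d) ℝ)
      = U * diagonal (fun i => hA.isHermitian.eigenvalues i - μ) * star U := by
    have hD : diagonal (fun i => hA.isHermitian.eigenvalues i - μ)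
        = diagonal (hA.isHermitian.eigenvalues) - μ • (1 : Matrix (Fin d) (Fin d) ℝ) := by
      rw [Matrix.smul_one_eq_diagonal, ← Matrix.diagonal_sub]
    rw [hD, Matrix.mul_sub, Matrix.sub_mul, ← hspec]
    congr 1
    rw [mul_smul_comm, Matrix.smul_mul, mul_one, hUU]
  rw [key]
  have hpsd : (diagonal (fun i => hA.isHermitian.eigenvalues i - μ)).PosSemidef :=
    Matrix.posSemidef_diagonal_iff.mpr fun i => sub_nonneg.mpr (hle i)
  have := hpsd.mul_mul_conjTranspose_same U
  rwa [show Uᴴ = star U from rfl] at this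

/-- A regularized approximate Hessian `H = Ĥ + c‖A‖·I` with `‖Ĥ − A‖ ≤ c‖A‖` is
positive definite and satisfies `(1 − 2cκ/(1+2cκ))·A⁻¹ ⪯ H⁻¹ ⪯ A⁻¹`,
where `κ = ‖A‖/λ_min(A)`. -/
theorem regularized_inverse_sandwich (d : ℕ) [NeZero d]
    (A : Matrix (Fin d) (Fin d) ℝ) (hA : A.PosDef)
    (κ : ℝ) (hκ : κ = specNorm A / (⨅ i, hA.isHermitian.eigenvalues i))
    (c : ℝ) (hc : 0 < c)
    (Hhat : Matrix (Fin d) (Fin d) ℝ) (hHhat : Hhat.PosSemidef)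
    (hclose : specNorm (Hhat - A) ≤ c * specNorm A)
    (H : Matrix (Fin d) (Fin d) ℝ)
    (hH : H = Hhat + (c * specNorm A) • (1 : Matrix (Fin d) (Fin d) ℝ)) :
    H.PosDef ∧ (A⁻¹ - H⁻¹).PosSemidef ∧
      (H⁻¹ - (1 - 2 * c * κ / (1 + 2 * c * κ)) • A⁻¹).PosSemidef := by
  have hμpos : 0 < ⨅ i, hA.isHermitian.eigenvalues i := by
    obtain ⟨i, hi⟩ := exists_eq_ciInf_of_finite (f := hA.isHermitian.eigenvalues)
    rw [← hi]
    exact hA.eigenvalues_pos i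
  have hσ0 : (0:ℝ) ≤ specNorm A := norm_nonneg _
  have hκ0 : 0 ≤ κ := by rw [hκ]; positivity
  have hκμ : κ * (⨅ i, hA.isHermitian.eigenvalues i) = specNorm A := by
    rw [hκ]; field_simp
  have hEh : (Hhat - A).IsHermitian := hHhat.1.sub hA.isHermitian
  obtain ⟨b1, b2⟩ := psd_of_norm_le hEh hclose
  have hHA : H - A = (Hhat - A) + (c * specNorm A) • (1 : Matrix (Fin d) (Fin d) ℝ) := by
    rw [hH]; abel
  have hHpd : H.PosDef := by
    have hsplit : H = A + ((Hhat - A) + (c * specNorm A) • (1 : Matrix (Fin d) (Fin d) ℝ)) := by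
      rw [hH]; abel
    rw [hsplit]
    exact hA.add_posSemidef b2
  have hpos1 : (0:ℝ) < 1 + 2*c*κ := by positivity
  have hBpd : ((1 + 2*c*κ) • A).PosDef := posdef_smul hA hpos1
  have hBH : ((1 + 2*c*κ) • A - H).PosSemidef := by
    have hs : (2*c*κ) * (⨅ i, hA.isHermitian.eigenvalues i) = 2*(c * specNorm A) := by
      rw [mul_assoc, hκμ]
      ring
    have e : (1 + 2*c*κ) • A - H
        = ((c * specNorm A) • (1 : Matrix (Fin d) (Fin d) ℝ) - (Hhat - A))
          + (2*c*κ) • (A - (⨅ i, hA.isHermitian.eigenvalues i)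
              • (1 : Matrix (Fin d) (Fin d) ℝ)) := by
      rw [hH, smul_sub, smul_smul, hs]
      module
    rw [e]
    exact b1.add (psd_smul (lam_min_psd hA) (by positivity))
  have h2 := inv_anti hHpd hBpd hBH
  have hinv : ((1 + 2*c*κ) • A)⁻¹ = (1 + 2*c*κ)⁻¹ • A⁻¹ := by
    have : Invertible (1 + 2*c*κ) := invertibleOfNonzero hpos1.ne'
    rw [A.inv_smul (1 + 2*c*κ) hA.det_pos.ne'.isUnit, invOf_eq_inv]
  have hcoef : 1 - 2 * c * κ / (1 + 2 * c * κ) = (1 + 2*c*κ)⁻¹ := by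
    field_simp
    ring
  refine ⟨hHpd, ?_, ?_⟩
  · apply inv_anti hA hHpd
    rw [hHA]
    exact b2
  · rw [hcoef, ← hinv]
    exact h2
end

section
/- Let A be a real symmetric positive definite d×d matrix with positive semidefinite square root A^{1/2}, let b ∈ ℝ^d, and let F(x) = (1/2)·xᵀAx − bᵀx, so ∇F(x) = Ax − b. Let H be an invertible d×d matrix, let θ ∈ ℝ, and given points x, x' ∈ ℝ^d define y = (1 + θ)·x − θ·x' and x⁺ = y − H⁻¹∇F(y). Then A^{-1/2}∇F(x⁺) = (I − A^{1/2} H⁻¹ A^{1/2})·( (1 + θ)·A^{-1/2}∇F(x) − θ·A^{-1/2}∇F(x') ). -/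
open Matrix

namespace Matrix.PosSemidef

open scoped ComplexOrder

/-- The square root of a positive semidefinite matrix, as defined in the older Mathlib. -/
noncomputable def sqrt {n 𝕜 : Type*} [Fintype n] [DecidableEq n] [RCLike 𝕜]
    {A : Matrix n n 𝕜} (hA : A.PosSemidef) : Matrix n n 𝕜 :=
  hA.1.eigenvectorUnitary.1 * diagonal ((↑) ∘ (√·) ∘ hA.1.eigenvalues) *
  (star hA.1.eigenvectorUnitary : Matrix n n 𝕜)

lemma sqrt_mul_self {n 𝕜 : Type*} [Fintype n] [DecidableEq n] [RCLike 𝕜]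
    {A : Matrix n n 𝕜} (hA : A.PosSemidef) : hA.sqrt * hA.sqrt = A := by
  have hU : (star hA.1.eigenvectorUnitary : Matrix n n 𝕜) * hA.1.eigenvectorUnitary.1 = 1 :=
    Unitary.star_mul_self_of_mem hA.1.eigenvectorUnitary.2
  have hD : diagonal (((↑) ∘ (√·) ∘ hA.1.eigenvalues) : n → 𝕜) *
      diagonal ((↑) ∘ (√·) ∘ hA.1.eigenvalues) = diagonal (RCLike.ofReal ∘ hA.1.eigenvalues) := by
    rw [diagonal_mul_diagonal]
    congr 1
    funext i
    simp only [Function.comp_apply]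
    rw [← RCLike.ofReal_mul, Real.mul_self_sqrt (hA.eigenvalues_nonneg i)]
  conv_rhs => rw [hA.1.spectral_theorem]
  rw [Unitary.conjStarAlgAut_apply]
  calc hA.sqrt * hA.sqrt = hA.1.eigenvectorUnitary.1 * diagonal ((↑) ∘ (√·) ∘ hA.1.eigenvalues) *
      ((star hA.1.eigenvectorUnitary : Matrix n n 𝕜) * hA.1.eigenvectorUnitary.1) *
      diagonal ((↑) ∘ (√·) ∘ hA.1.eigenvalues) * (star hA.1.eigenvectorUnitary : Matrix n n 𝕜) := by
        simp only [sqrt, mul_assoc]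
    _ = _ := by rw [hU, mul_one, mul_assoc (hA.1.eigenvectorUnitary.1 : Matrix n n 𝕜) (diagonal _) (diagonal _), hD]

end Matrix.PosSemidef
open Matrix

/-- One step of accelerated approximate Newton on a quadratic
`F(x) = (1/2)xᵀAx − bᵀx`: with `y = (1+θ)x − θx'` and `x⁺ = y − H⁻¹∇F(y)`,
`A^{-1/2}∇F(x⁺) = (I − A^{1/2}H⁻¹A^{1/2})((1+θ)A^{-1/2}∇F(x) − θA^{-1/2}∇F(x'))`. -/
theorem accelerated_newton_one_step_recursion (d : ℕ)
    (A : Matrix (Fin d) (Fin d) ℝ) (hA : A.PosDef)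
    (b : Fin d → ℝ)
    (gradF : (Fin d → ℝ) → (Fin d → ℝ)) (hgrad : ∀ v, gradF v = A.mulVec v - b)
    (H : Matrix (Fin d) (Fin d) ℝ) (hH : IsUnit H)
    (θ : ℝ) (x x' : Fin d → ℝ)
    (y : Fin d → ℝ) (hy : y = (1 + θ) • x - θ • x')
    (xplus : Fin d → ℝ) (hxplus : xplus = y - H⁻¹.mulVec (gradF y)) :
    (hA.posSemidef.sqrt)⁻¹.mulVec (gradF xplus) =
      ((1 : Matrix (Fin d) (Fin d) ℝ) -
          hA.posSemidef.sqrt * H⁻¹ * hA.posSemidef.sqrt).mulVec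
        ((1 + θ) • (hA.posSemidef.sqrt)⁻¹.mulVec (gradF x) -
          θ • (hA.posSemidef.sqrt)⁻¹.mulVec (gradF x')) := by
  set S := hA.posSemidef.sqrt with hSdef
  have hSS : S * S = A := hA.posSemidef.sqrt_mul_self
  have hSunit : IsUnit S := by
    rw [isUnit_iff_isUnit_det]
    have h : IsUnit (S.det * S.det) := by
      rw [← det_mul, hSS, ← isUnit_iff_isUnit_det]; exact hA.isUnit
    exact isUnit_of_mul_isUnit_left h
  have hSinv : S⁻¹ * S = 1 := nonsing_inv_mul S ((isUnit_iff_isUnit_det S).mp hSunit)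
  -- gradient is affine, so grad y = (1+θ) grad x − θ grad x'
  have hgy : gradF y = (1 + θ) • gradF x - θ • gradF x' := by
    rw [hgrad, hgrad, hgrad, hy]
    funext i
    simp [mulVec_sub, mulVec_smul, Pi.sub_apply, Pi.smul_apply, smul_eq_mul]
    ring
  -- grad xplus = grad y − A H⁻¹ grad y
  have hgp : gradF xplus = gradF y - A.mulVec (H⁻¹.mulVec (gradF y)) := by
    rw [hgrad, hxplus, hgrad y]
    funext i
    simp [mulVec_sub, Pi.sub_apply]
    ring
  have hSinvA : S⁻¹ * A = S := by
    rw [← hSS, ← mul_assoc, hSinv, one_mul]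
  calc S⁻¹.mulVec (gradF xplus)
      = S⁻¹.mulVec (gradF y) - (S⁻¹ * A * H⁻¹).mulVec (gradF y) := by
        rw [hgp, mulVec_sub, ← mulVec_mulVec, ← mulVec_mulVec]
    _ = (1 - S * H⁻¹ * S).mulVec (S⁻¹.mulVec (gradF y)) := by
        rw [hSinvA, sub_mulVec, one_mulVec, mulVec_mulVec, mul_assoc (S * H⁻¹),
          mul_nonsing_inv S ((isUnit_iff_isUnit_det S).mp hSunit), mul_one]
    _ = _ := by rw [hgy, mulVec_sub, mulVec_smul, mulVec_smul]
end

section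
/- Let 0 < π < 1, set θ = (1 − √(1 − π))/(1 + √(1 − π)), and let 0 ≤ λ ≤ π. Then every complex root z of the quadratic equation z² − (1+θ)λ·z + θλ = 0 satisfies |z| ≤ 1 − √(1 − π). Moreover, for 0 < λ ≤ π the discriminant (1+θ)²λ² − 4θλ is nonpositive and both roots have modulus exactly √(θλ). -/
lemma quad_root_abs (b c : ℝ) (h : b ^ 2 - 4 * c ≤ 0) (z : ℂ)
    (hz : z ^ 2 - (b : ℂ) * z + (c : ℂ) = 0) :
    ‖z‖ = Real.sqrt c := by
  set d : ℝ := c - b ^ 2 / 4 with hd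
  have hd0 : 0 ≤ d := by simp only [hd]; nlinarith
  have hsq : (z - (b : ℂ) / 2) ^ 2 = ((Complex.I * (Real.sqrt d : ℝ)) ^ 2) := by
    have h1 : (Real.sqrt d : ℝ) ^ 2 = d := Real.sq_sqrt hd0
    have h1c : ((Real.sqrt d : ℝ) : ℂ) ^ 2 = (d : ℂ) := by
      exact_mod_cast congrArg (fun x : ℝ => (x : ℂ)) h1
    have : (Complex.I * (Real.sqrt d : ℝ)) ^ 2 = -(d : ℂ) := by
      rw [mul_pow, Complex.I_sq, h1c]; ring
    rw [this]
    have : (z - (b : ℂ) / 2) ^ 2 = z ^ 2 - (b : ℂ) * z + (c : ℂ) + ((b:ℂ)^2/4 - c) := by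
      ring
    rw [this, hz, hd]
    push_cast
    ring
  have hcases : z - (b : ℂ) / 2 = Complex.I * (Real.sqrt d : ℝ) ∨
      z - (b : ℂ) / 2 = -(Complex.I * (Real.sqrt d : ℝ)) :=
    sq_eq_sq_iff_eq_or_eq_neg.mp hsq
  have hc0 : 0 ≤ c := by nlinarith
  have habs : ‖z‖ ^ 2 = c := by
    rcases hcases with hcase | hcase
    · have hzval : z = (b : ℂ) / 2 + Complex.I * (Real.sqrt d : ℝ) := by
        linear_combination hcase
      rw [hzval, Complex.sq_norm]
      simp [Complex.normSq_apply, hd]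
      nlinarith [Real.mul_self_sqrt (show (0:ℝ) ≤ c - b ^ 2 / 4 by nlinarith)]
    · have hzval : z = (b : ℂ) / 2 - Complex.I * (Real.sqrt d : ℝ) := by
        linear_combination hcase
      rw [hzval, Complex.sq_norm]
      simp [Complex.normSq_apply, hd]
      nlinarith [Real.mul_self_sqrt (show (0:ℝ) ≤ c - b ^ 2 / 4 by nlinarith)]
  rw [← habs, Real.sqrt_sq (norm_nonneg z)]

/-- With `θ = (1 − √(1−π))/(1 + √(1−π))` and `0 ≤ lam ≤ π`, every complex root of
`z² − (1+θ)·lam·z + θ·lam = 0` has modulus at most `1 − √(1−π)`; moreover for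
`0 < lam ≤ π` the discriminant is nonpositive and both roots have modulus
exactly `√(θ·lam)`. -/
theorem quadratic_roots_modulus_bound (π θ lam : ℝ)
    (hπ0 : 0 < π) (hπ1 : π < 1)
    (hθ : θ = (1 - Real.sqrt (1 - π)) / (1 + Real.sqrt (1 - π)))
    (hlam0 : 0 ≤ lam) (hlamπ : lam ≤ π) :
    (∀ z : ℂ, z ^ 2 - (((1 + θ) * lam : ℝ) : ℂ) * z + ((θ * lam : ℝ) : ℂ) = 0 →
        ‖z‖ ≤ 1 - Real.sqrt (1 - π)) ∧
      (0 < lam →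
        (1 + θ) ^ 2 * lam ^ 2 - 4 * θ * lam ≤ 0 ∧
          ∀ z : ℂ, z ^ 2 - (((1 + θ) * lam : ℝ) : ℂ) * z + ((θ * lam : ℝ) : ℂ) = 0 →
            ‖z‖ = Real.sqrt (θ * lam)) := by
  set s : ℝ := Real.sqrt (1 - π) with hs
  have hs0 : 0 < s := Real.sqrt_pos.mpr (by linarith)
  have hs2 : s ^ 2 = 1 - π := Real.sq_sqrt (by linarith)
  have hs1 : s < 1 := by nlinarith
  have hden : (0:ℝ) < 1 + s := by linarith
  have hθ0 : 0 ≤ θ := by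
    rw [hθ]; exact div_nonneg (by linarith) (by linarith)
  have hkey : (1 + θ) ^ 2 * π = 4 * θ := by
    rw [hθ]; field_simp; nlinarith
  have hθπ : θ * π = (1 - s) ^ 2 := by
    rw [hθ]; field_simp; nlinarith
  have hdisc : (1 + θ) ^ 2 * lam ^ 2 - 4 * θ * lam ≤ 0 := by
    nlinarith [sq_nonneg (1 + θ), mul_nonneg hlam0 (mul_nonneg hθ0 hlam0)]
  have hdisc' : ((1 + θ) * lam) ^ 2 - 4 * (θ * lam) ≤ 0 := by nlinarith
  have habs : ∀ z : ℂ, z ^ 2 - (((1 + θ) * lam : ℝ) : ℂ) * z + ((θ * lam : ℝ) : ℂ) = 0 →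
      ‖z‖ = Real.sqrt (θ * lam) := fun z hz => quad_root_abs _ _ hdisc' z hz
  refine ⟨fun z hz => ?_, fun _ => ⟨hdisc, habs⟩⟩
  rw [habs z hz]
  calc Real.sqrt (θ * lam) ≤ Real.sqrt (θ * π) :=
        Real.sqrt_le_sqrt (mul_le_mul_of_nonneg_left hlamπ hθ0)
    _ = 1 - s := by rw [hθπ, Real.sqrt_sq (by linarith)]
end

section
/- Let B be a real s×d matrix, let α > 0, and set H = BᵀB + α·I_d and A = BBᵀ + α·I_s. Let g ∈ ℝ^d, set ĝ = α⁻¹·Bg, and for an arbitrary vector q ∈ ℝ^s define p = α⁻¹·g − Bᵀq. Then p − H⁻¹g = Bᵀ(A⁻¹ĝ − q), and consequently ‖Hp − g‖ ≤ ‖H‖·‖B‖·‖A⁻¹ĝ − q‖. -/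
open Matrix
open scoped BigOperators

/-- Euclidean norm of a vector. -/
noncomputable def vecEnorm {d : ℕ} (v : Fin d → ℝ) : ℝ := Real.sqrt (∑ i, (v i) ^ 2)

open scoped Matrix.Norms.L2Operator in
lemma specNorm_eq_l2 {m n : ℕ} (A : Matrix (Fin m) (Fin n) ℝ) : specNorm A = ‖A‖ := rfl

lemma enorm_eq_norm {n : ℕ} (v : Fin n → ℝ) :
    vecEnorm v = ‖(WithLp.equiv 2 (Fin n → ℝ)).symm v‖ := by
  rw [vecEnorm, EuclideanSpace.norm_eq]
  congr 1
  refine Finset.sum_congr rfl fun i _ => ?_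
  simp [Real.norm_eq_abs, sq_abs]

open scoped Matrix.Norms.L2Operator in
lemma enorm_mulVec_le {m n : ℕ} (A : Matrix (Fin m) (Fin n) ℝ) (x : Fin n → ℝ) :
    vecEnorm (A.mulVec x) ≤ specNorm A * vecEnorm x := by
  rw [specNorm_eq_l2, enorm_eq_norm, enorm_eq_norm]
  exact A.l2_opNorm_mulVec ((WithLp.equiv 2 (Fin n → ℝ)).symm x)

open scoped Matrix.Norms.L2Operator in
lemma specNorm_transpose {m n : ℕ} (A : Matrix (Fin m) (Fin n) ℝ) :
    specNorm Aᵀ = specNorm A := by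
  rw [specNorm_eq_l2, specNorm_eq_l2, ← A.conjTranspose_eq_transpose_of_trivial]
  exact A.l2_opNorm_conjTranspose

lemma specNorm_nonneg {m n : ℕ} (A : Matrix (Fin m) (Fin n) ℝ) : 0 ≤ specNorm A :=
  norm_nonneg _

/-- Woodbury-based sub-problem solver accuracy: with `H = BᵀB + αI_d`,
`A = BBᵀ + αI_s`, `ĝ = α⁻¹Bg` and `p = α⁻¹g − Bᵀq`, one has
`p − H⁻¹g = Bᵀ(A⁻¹ĝ − q)` and `‖Hp − g‖ ≤ ‖H‖‖B‖‖A⁻¹ĝ − q‖`. -/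
theorem woodbury_approximate_subproblem_solver (s d : ℕ)
    (B : Matrix (Fin s) (Fin d) ℝ) (α : ℝ) (hα : 0 < α)
    (H : Matrix (Fin d) (Fin d) ℝ)
    (hH : H = Bᵀ * B + α • (1 : Matrix (Fin d) (Fin d) ℝ))
    (A : Matrix (Fin s) (Fin s) ℝ)
    (hA : A = B * Bᵀ + α • (1 : Matrix (Fin s) (Fin s) ℝ))
    (g : Fin d → ℝ)
    (ghat : Fin s → ℝ) (hghat : ghat = α⁻¹ • B.mulVec g)
    (q : Fin s → ℝ)
    (p : Fin d → ℝ) (hp : p = α⁻¹ • g - Bᵀ.mulVec q) :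
    p - H⁻¹.mulVec g = Bᵀ.mulVec (A⁻¹.mulVec ghat - q) ∧
      vecEnorm (H.mulVec p - g) ≤
        specNorm H * specNorm B * vecEnorm (A⁻¹.mulVec ghat - q) := by
  have hα0 : α ≠ 0 := hα.ne'
  have hsm : ∀ k : ℕ, (α • (1 : Matrix (Fin k) (Fin k) ℝ)).PosDef := by
    intro k
    rw [smul_one_eq_diagonal]
    exact posDef_diagonal_iff.2 fun _ => hα
  have hApd : A.PosDef := by
    rw [hA]
    have := (Matrix.posSemidef_self_mul_conjTranspose B)
    rw [B.conjTranspose_eq_transpose_of_trivial] at this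
    exact Matrix.PosDef.posSemidef_add this (hsm s)
  have hHpd : H.PosDef := by
    rw [hH]
    have := (Matrix.posSemidef_conjTranspose_mul_self B)
    rw [B.conjTranspose_eq_transpose_of_trivial] at this
    exact Matrix.PosDef.posSemidef_add this (hsm d)
  have hAdet : IsUnit A.det := (Matrix.isUnit_iff_isUnit_det A).1 hApd.isUnit
  have hHdet : IsUnit H.det := (Matrix.isUnit_iff_isUnit_det H).1 hHpd.isUnit
  have hAA : A * A⁻¹ = 1 := Matrix.mul_nonsing_inv A hAdet
  have hHH : H * H⁻¹ = 1 := Matrix.mul_nonsing_inv H hHdet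
  -- the key intertwining identity
  have hkey : H * Bᵀ = Bᵀ * A := by
    rw [hH, hA, Matrix.add_mul, Matrix.mul_add, Matrix.smul_mul, Matrix.mul_smul,
      Matrix.one_mul, Matrix.mul_one, Matrix.mul_assoc]
  -- Woodbury formula for H⁻¹
  have hwood : H⁻¹ = α⁻¹ • (1 : Matrix (Fin d) (Fin d) ℝ) - α⁻¹ • (Bᵀ * A⁻¹ * B) := by
    refine Matrix.inv_eq_right_inv ?_
    have h1 : H * (α⁻¹ • (Bᵀ * A⁻¹ * B)) = α⁻¹ • (Bᵀ * B) := by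
      rw [Matrix.mul_smul]
      congr 1
      calc H * (Bᵀ * A⁻¹ * B) = H * Bᵀ * (A⁻¹ * B) := by
            simp only [Matrix.mul_assoc]
        _ = Bᵀ * (A * (A⁻¹ * B)) := by rw [hkey, Matrix.mul_assoc]
        _ = Bᵀ * B := by rw [← Matrix.mul_assoc A, hAA, Matrix.one_mul]
    rw [mul_sub, h1, Matrix.mul_smul, mul_one, hH]
    rw [smul_add, smul_smul, inv_mul_cancel₀ hα0, one_smul]
    abel
  -- Part 1
  have h1 : p - H⁻¹.mulVec g = Bᵀ.mulVec (A⁻¹.mulVec ghat - q) := by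
    rw [hp, hghat, hwood, Matrix.mulVec_sub, Matrix.sub_mulVec,
      Matrix.smul_mulVec, Matrix.one_mulVec, Matrix.smul_mulVec]
    simp only [Matrix.mulVec_smul, Matrix.mulVec_mulVec, Matrix.mul_assoc]
    abel
  refine ⟨h1, ?_⟩
  -- Part 2
  set v : Fin s → ℝ := A⁻¹.mulVec ghat - q with hv
  have hp2 : p = Bᵀ.mulVec v + H⁻¹.mulVec g := sub_eq_iff_eq_add.mp h1
  have h2 : H.mulVec p - g = H.mulVec (Bᵀ.mulVec v) := by
    rw [hp2, Matrix.mulVec_add]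
    simp only [Matrix.mulVec_mulVec]
    rw [hHH, Matrix.one_mulVec]
    abel
  rw [h2]
  calc vecEnorm (H.mulVec (Bᵀ.mulVec v)) ≤ specNorm H * vecEnorm (Bᵀ.mulVec v) :=
        enorm_mulVec_le H _
    _ ≤ specNorm H * (specNorm Bᵀ * vecEnorm v) := by
        exact mul_le_mul_of_nonneg_left (enorm_mulVec_le Bᵀ v) (specNorm_nonneg H)
    _ = specNorm H * specNorm B * vecEnorm v := by rw [specNorm_transpose, mul_assoc]
end
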